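/- Suppose f_{α,γ}(λ,∂) ∈ ℂ[λ,∂] (α, γ ∈ Δ) satisfies the intermediate-series equation and every f_{α,γ} is nonzero. Then for all β, γ ∈ Δ, the total degree of f_{β,γ}(λ,∂) as a polynomial in λ and ∂ is at most 2 (i.e. strictly smaller than 3). -/

import Mathlib

/-- Evaluation of a two-variable polynomial `P(λ,∂) ∈ ℂ[λ,∂]` at `λ = l`, `∂ = d`. -/
noncomputable def ev2 (P : MvPolynomial (Fin 2) ℂ) (l d : ℂ) : ℂ :=
  MvPolynomial.eval ![l, d] P

/-- `B(α,β) = (1/b)(φ(α)β − φ(β)α + b(φ(α) − φ(β)))`. -/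
noncomputable def Bc (b : ℂ) {Δ : AddSubgroup ℂ} (φ : Δ →+ ℂ) (α β : Δ) : ℂ :=
  (1 / b) * (φ α * (β : ℂ) - φ β * (α : ℂ) + b * (φ α - φ β))

/-- The intermediate-series equation for a family `f_{α,γ}(λ,∂) ∈ ℂ[λ,∂]`:
`((β+b)λ − (α+b)μ + B(α,β)) f_{α+β,γ}(λ+μ,∂)
  = f_{β,γ}(μ,λ+∂) f_{α,β+γ}(λ,∂) − f_{α,γ}(λ,μ+∂) f_{β,α+γ}(μ,∂)`
for all `α, β, γ ∈ Δ` (an identity in `ℂ[λ,μ,∂]`, stated via evaluation at all complex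
points `l, m, d`).  Equivalently, `V = ⊕_{γ∈Δ} ℂ[∂]M_γ` with
`x_α λ M_γ = f_{α,γ}(λ,∂) M_{α+γ}` is a free intermediate series module over
`CL(b,φ)`. -/
def ISE (Δ : AddSubgroup ℂ) (b : ℂ) (φ : Δ →+ ℂ)
    (f : Δ → Δ → MvPolynomial (Fin 2) ℂ) : Prop :=
  ∀ α β γ : Δ, ∀ l m d : ℂ,
    (((β : ℂ) + b) * l - ((α : ℂ) + b) * m + Bc b φ α β)
        * ev2 (f (α + β) γ) (l + m) d
      = ev2 (f β γ) m (l + d) * ev2 (f α (β + γ)) l d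
        - ev2 (f α γ) l (m + d) * ev2 (f β (α + γ)) m d


open Polynomial in
lemma algHom_eval_aeval {A : Type*} [CommRing A] [Algebra ℂ A] (ψ : A →ₐ[ℂ] ℂ)
    (v : Fin 2 → A) (P : MvPolynomial (Fin 2) ℂ) :
    ψ (MvPolynomial.aeval v P) = MvPolynomial.eval (fun i => ψ (v i)) P := by
  induction P using MvPolynomial.induction_on with
  | C a => simp
  | add p q hp hq => simp [hp, hq]
  | mul_X p i hp => simp [hp]

open Polynomial in
lemma peval_aeval (v : Fin 2 → Polynomial ℂ) (P : MvPolynomial (Fin 2) ℂ) (m : ℂ) :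
    eval m (MvPolynomial.aeval v P) = MvPolynomial.eval (fun i => eval m (v i)) P := by
  have h := algHom_eval_aeval (Polynomial.aeval m) v P
  simpa [Polynomial.coe_aeval_eq_eval] using h

lemma meval_aeval (v : Fin 2 → MvPolynomial (Fin 2) ℂ) (P : MvPolynomial (Fin 2) ℂ)
    (w : Fin 2 → ℂ) :
    MvPolynomial.eval w (MvPolynomial.aeval v P)
      = MvPolynomial.eval (fun i => MvPolynomial.eval w (v i)) P := by
  have h := algHom_eval_aeval (MvPolynomial.aeval w) v P
  simpa using h

open Polynomial

lemma coeff_zero_aeval_fst (l d : ℂ) (P : MvPolynomial (Fin 2) ℂ) :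
    (MvPolynomial.aeval ![C l + X, C d] P).coeff 0 = MvPolynomial.eval ![l, d] P := by
  rw [coeff_zero_eq_eval_zero, peval_aeval]
  have hv : (fun i => eval (0:ℂ) (![C l + X, C d] i)) = ![l, d] := by
    funext i; fin_cases i <;> simp
  rw [hv]

lemma coeff_zero_aeval_snd (l d : ℂ) (P : MvPolynomial (Fin 2) ℂ) :
    (MvPolynomial.aeval ![C l, C d + X] P).coeff 0 = MvPolynomial.eval ![l, d] P := by
  rw [coeff_zero_eq_eval_zero, peval_aeval]
  have hv : (fun i => eval (0:ℂ) (![C l, C d + X] i)) = ![l, d] := by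
    funext i; fin_cases i <;> simp
  rw [hv]

lemma coeff_one_aeval_fst (l d : ℂ) (P : MvPolynomial (Fin 2) ℂ) :
    (MvPolynomial.aeval ![C l + X, C d] P).coeff 1
      = MvPolynomial.eval ![l, d] (MvPolynomial.pderiv 0 P) := by
  induction P using MvPolynomial.induction_on with
  | C a => simp
  | add p q hp hq => simp [hp, hq]
  | mul_X p i hp =>
    rw [map_mul]
    fin_cases i <;> simp only [Fin.zero_eta, Fin.mk_one, Fin.isValue]
    · have hv : (MvPolynomial.aeval ![C l + X, C d] (MvPolynomial.X 0 : MvPolynomial (Fin 2) ℂ))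
          = C l + X := by simp
      rw [hv, mul_add, coeff_add, coeff_mul_C, coeff_mul_X, hp, coeff_zero_aeval_fst,
        MvPolynomial.pderiv_mul, MvPolynomial.pderiv_X_self]
      simp [mul_comm]
    · have hv : (MvPolynomial.aeval ![C l + X, C d] (MvPolynomial.X 1 : MvPolynomial (Fin 2) ℂ))
          = C d := by simp
      rw [hv, coeff_mul_C, hp, MvPolynomial.pderiv_mul]
      have : MvPolynomial.pderiv (0 : Fin 2) (MvPolynomial.X 1 : MvPolynomial (Fin 2) ℂ) = 0 := by
        simp [MvPolynomial.pderiv_X]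
      simp [this, mul_comm]

lemma coeff_one_aeval_snd (l d : ℂ) (P : MvPolynomial (Fin 2) ℂ) :
    (MvPolynomial.aeval ![C l, C d + X] P).coeff 1
      = MvPolynomial.eval ![l, d] (MvPolynomial.pderiv 1 P) := by
  induction P using MvPolynomial.induction_on with
  | C a => simp
  | add p q hp hq => simp [hp, hq]
  | mul_X p i hp =>
    rw [map_mul]
    fin_cases i <;> simp only [Fin.zero_eta, Fin.mk_one, Fin.isValue]
    · have hv : (MvPolynomial.aeval ![C l, C d + X] (MvPolynomial.X 0 : MvPolynomial (Fin 2) ℂ))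
          = C l := by simp
      rw [hv, coeff_mul_C, hp, MvPolynomial.pderiv_mul]
      have : MvPolynomial.pderiv (1 : Fin 2) (MvPolynomial.X 0 : MvPolynomial (Fin 2) ℂ) = 0 := by
        simp [MvPolynomial.pderiv_X]
      simp [this, mul_comm]
    · have hv : (MvPolynomial.aeval ![C l, C d + X] (MvPolynomial.X 1 : MvPolynomial (Fin 2) ℂ))
          = C d + X := by simp
      rw [hv, mul_add, coeff_add, coeff_mul_C, coeff_mul_X, hp, coeff_zero_aeval_snd,
        MvPolynomial.pderiv_mul, MvPolynomial.pderiv_X_self]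
      simp [mul_comm]

lemma coeff_pderiv (i : Fin 2) (u : Fin 2 →₀ ℕ) (P : MvPolynomial (Fin 2) ℂ) :
    MvPolynomial.coeff u (MvPolynomial.pderiv i P)
      = ((u i : ℂ) + 1) * MvPolynomial.coeff (u + Finsupp.single i 1) P := by
  induction P using MvPolynomial.induction_on' with
  | add p q hp hq => simp [hp, hq]; ring
  | monomial s a =>
    rw [MvPolynomial.pderiv_monomial, MvPolynomial.coeff_monomial, MvPolynomial.coeff_monomial]
    by_cases h : s = u + Finsupp.single i 1
    · subst h
      have h1 : u + Finsupp.single i 1 - Finsupp.single i 1 = u := add_tsub_cancel_right _ _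
      rw [if_pos h1, if_pos rfl]
      have h2 : (u + Finsupp.single i 1 : Fin 2 →₀ ℕ) i = u i + 1 := by simp
      rw [h2]
      push_cast
      ring
    · rw [if_neg h]
      by_cases hs : s i = 0
      · split_ifs <;> simp [hs]
      · have hne : ¬ (s - Finsupp.single i 1 = u) := by
          intro he
          apply h
          rw [← he, tsub_add_cancel_of_le]
          rw [Finsupp.single_le_iff]
          omega
        rw [if_neg hne, mul_zero]

lemma coeff_X_mul_pderiv (i : Fin 2) (u : Fin 2 →₀ ℕ) (P : MvPolynomial (Fin 2) ℂ) :
    MvPolynomial.coeff u (MvPolynomial.X i * MvPolynomial.pderiv i P)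
      = (u i : ℂ) * MvPolynomial.coeff u P := by
  classical
  rw [MvPolynomial.coeff_X_mul']
  by_cases h : i ∈ u.support
  · rw [if_pos h, coeff_pderiv]
    have hui : u i ≠ 0 := Finsupp.mem_support_iff.mp h
    have h1 : u - Finsupp.single i 1 + Finsupp.single i 1 = u := by
      rw [tsub_add_cancel_of_le]
      rw [Finsupp.single_le_iff]
      omega
    rw [h1]
    have h2 : (u - Finsupp.single i 1 : Fin 2 →₀ ℕ) i = u i - 1 := by simp [Finsupp.tsub_apply]
    rw [h2]
    congr 1
    have h3 : u i - 1 + 1 = u i := by omega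
    conv_rhs => rw [← h3]
    push_cast
    ring
  · rw [if_neg h]
    have : u i = 0 := by simpa using h
    simp [this]

lemma sum_add_single (u : Fin 2 →₀ ℕ) (i : Fin 2) :
    ((u + Finsupp.single i 1).sum fun _ e => e) = (u.sum fun _ e => e) + 1 := by
  rw [Finsupp.sum_add_index' (fun _ => rfl) (fun _ _ _ => rfl)]
  rw [Finsupp.sum_single_index rfl]

open Polynomial

noncomputable def Th : MvPolynomial (Fin 2) ℂ →ₐ[ℂ] Polynomial (Polynomial ℂ) :=
  MvPolynomial.aeval ![Polynomial.X, Polynomial.C Polynomial.X]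

lemma Th_map_eval (d : ℂ) (P : MvPolynomial (Fin 2) ℂ) :
    (Th P).map (evalRingHom d) = MvPolynomial.aeval ![X, C d] P := by
  induction P using MvPolynomial.induction_on with
  | C a => simp [Th, MvPolynomial.algebraMap_eq, Polynomial.map_C]
  | add p q hp hq => simp [map_add, Polynomial.map_add, hp, hq]
  | mul_X p i hp =>
    rw [map_mul, map_mul, Polynomial.map_mul, hp]
    congr 1
    fin_cases i <;> simp [Th]

lemma Th_pderiv_fst (P : MvPolynomial (Fin 2) ℂ) :
    Th (MvPolynomial.pderiv 0 P) = Polynomial.derivative (Th P) := by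
  induction P using MvPolynomial.induction_on with
  | C a => simp [Th, MvPolynomial.algebraMap_eq]
  | add p q hp hq => simp [map_add, hp, hq]
  | mul_X p i hp =>
    rw [MvPolynomial.pderiv_mul, map_add, map_mul, map_mul, hp,
      show Th (p * MvPolynomial.X i) = Th p * Th (MvPolynomial.X i) from map_mul _ _ _,
      derivative_mul]
    refine congrArg (_ + ·) (congrArg (Th p * ·) ?_)
    fin_cases i <;> simp [Th, MvPolynomial.pderiv_X]

lemma Th_pderiv_snd_coeff (P : MvPolynomial (Fin 2) ℂ) (n : ℕ) :
    (Th (MvPolynomial.pderiv 1 P)).coeff n = Polynomial.derivative ((Th P).coeff n) := by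
  induction P using MvPolynomial.induction_on generalizing n with
  | C a =>
    simp [Th, MvPolynomial.algebraMap_eq, Polynomial.coeff_C]
    split_ifs <;> simp
  | add p q hp hq => simp [map_add, hp, hq]
  | mul_X p i hp =>
    rw [MvPolynomial.pderiv_mul, map_add, map_mul, map_mul]
    fin_cases i <;> simp only [Fin.zero_eta, Fin.mk_one, Fin.isValue]
    · have h0 : Th (MvPolynomial.X 0) = X := by simp [Th]
      have h1 : MvPolynomial.pderiv (1 : Fin 2) (MvPolynomial.X (0 : Fin 2) : MvPolynomial (Fin 2) ℂ) = 0 :=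
        MvPolynomial.pderiv_X_of_ne (by decide)
      rw [h0, h1, map_zero, mul_zero, add_zero,
        show Th (p * MvPolynomial.X 0) = Th p * X by rw [map_mul, h0]]
      cases n with
      | zero => simp [Polynomial.coeff_mul_X_zero]
      | succ k => simp [Polynomial.coeff_mul_X, hp]
    · have h0 : Th (MvPolynomial.X 1) = C X := by simp [Th]
      have h1 : MvPolynomial.pderiv (1 : Fin 2) (MvPolynomial.X (1 : Fin 2) : MvPolynomial (Fin 2) ℂ) = 1 :=
        MvPolynomial.pderiv_X_self 1
      rw [h0, h1, map_one, mul_one,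
        show Th (p * MvPolynomial.X 1) = Th p * C X by rw [map_mul, h0]]
      simp [Polynomial.coeff_mul_C, hp, Polynomial.derivative_mul]

lemma Th_pderiv_snd_natDegree (P : MvPolynomial (Fin 2) ℂ) :
    (Th (MvPolynomial.pderiv 1 P)).natDegree ≤ (Th P).natDegree := by
  rw [Polynomial.natDegree_le_iff_coeff_eq_zero]
  intro N hN
  rw [Th_pderiv_snd_coeff, Polynomial.coeff_eq_zero_of_natDegree_lt hN]
  simp

lemma vec_eta (x : Fin 2 → ℂ) : ![x 0, x 1] = x := by
  funext i; fin_cases i <;> rfl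


lemma Th_eq_zero_iff (P : MvPolynomial (Fin 2) ℂ) (h : Th P = 0) : P = 0 := by
  apply MvPolynomial.funext
  intro x
  rw [map_zero, ← vec_eta x]
  have hv : (fun i => eval (x 0) (![X, C (x 1)] i)) = ![x 0, x 1] := by
    funext i; fin_cases i <;> simp
  have h1 : MvPolynomial.eval ![x 0, x 1] P
      = eval (x 0) (MvPolynomial.aeval ![X, C (x 1)] P) := by
    rw [peval_aeval, hv]
  rw [h1, ← Th_map_eval, h]
  simp
namespace Stmt14Aux

open Polynomial

lemma maeval_eq_eval (w : Fin 2 → ℂ) (p : MvPolynomial (Fin 2) ℂ) :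
    MvPolynomial.aeval w p = MvPolynomial.eval w p := by
  rw [← MvPolynomial.coe_aeval_eq_eval]; rfl

lemma eval_polyAeval (w : Fin 2 → ℂ) (q : Polynomial ℂ) (p : MvPolynomial (Fin 2) ℂ) :
    MvPolynomial.eval w (Polynomial.aeval p q)
      = Polynomial.eval (MvPolynomial.eval w p) q := by
  rw [← maeval_eq_eval, ← Polynomial.aeval_algHom_apply (MvPolynomial.aeval w) p q,
    maeval_eq_eval]
  exact congrFun (Polynomial.coe_aeval_eq_eval _) q

lemma polyaeval_eq_comp (p q : Polynomial ℂ) : Polynomial.aeval p q = q.comp p := by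
  rw [Polynomial.aeval_def, Polynomial.comp, Polynomial.algebraMap_eq]

variable {Δ : AddSubgroup ℂ}

/-- The polynomial `x ↦ (∂₀ f_{0,γ})(0, x)`. -/
noncomputable def Qp (f : Δ → Δ → MvPolynomial (Fin 2) ℂ) (γ : Δ) : Polynomial ℂ :=
  MvPolynomial.aeval ![0, Polynomial.X] (MvPolynomial.pderiv 0 (f 0 γ))

lemma Qp_eval (f : Δ → Δ → MvPolynomial (Fin 2) ℂ) (γ : Δ) (x : ℂ) :
    (Qp f γ).eval x = MvPolynomial.eval ![0, x] (MvPolynomial.pderiv 0 (f 0 γ)) := by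
  rw [Qp, peval_aeval]
  have hv : (fun i => eval x ((![0, Polynomial.X] : Fin 2 → Polynomial ℂ) i)) = ![(0:ℂ), x] := by
    funext i; fin_cases i <;> simp
  rw [hv]

lemma aeval_eval_fst (P : MvPolynomial (Fin 2) ℂ) (l d m : ℂ) :
    eval m (MvPolynomial.aeval ![C l + X, C d] P) = ev2 P (l + m) d := by
  rw [peval_aeval, ev2]
  have hv : (fun i => eval m ((![C l + X, C d] : Fin 2 → Polynomial ℂ) i)) = ![l + m, d] := by
    funext i; fin_cases i <;> simp
  rw [hv]

lemma aeval_eval_snd (P : MvPolynomial (Fin 2) ℂ) (l d m : ℂ) :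
    eval m (MvPolynomial.aeval ![C l, C d + X] P) = ev2 P l (d + m) := by
  rw [peval_aeval, ev2]
  have hv : (fun i => eval m ((![C l, C d + X] : Fin 2 → Polynomial ℂ) i)) = ![l, d + m] := by
    funext i; fin_cases i <;> simp
  rw [hv]

lemma coeff_one_mul (p q : Polynomial ℂ) :
    (p * q).coeff 1 = p.coeff 0 * q.coeff 1 + p.coeff 1 * q.coeff 0 := by
  rw [Polynomial.coeff_mul]
  have h1 : (Finset.HasAntidiagonal.antidiagonal 1 : Finset (ℕ × ℕ)) = {(0,1),(1,0)} := by decide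
  rw [h1, Finset.sum_insert (by decide), Finset.sum_singleton]

section Main

variable (b : ℂ) (φ : Δ →+ ℂ) (f : Δ → Δ → MvPolynomial (Fin 2) ℂ)

/-- Step A : `f_{0,γ}(0, x) = b x + c_γ`. -/
lemma stepA (hf : ISE Δ b φ f) (hnz : ∀ α γ : Δ, f α γ ≠ 0) (γ : Δ) (x : ℂ) :
    ev2 (f 0 γ) 0 x = b * x + ev2 (f 0 γ) 0 0 := by
  have key : ∀ l d : ℂ,
      ev2 (f 0 γ) l d * (b * l - ev2 (f 0 γ) 0 (l + d) + ev2 (f 0 γ) 0 d) = 0 := by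
    intro l d
    have h := hf 0 0 γ l 0 d
    have hB : Bc b φ 0 0 = 0 := by simp [Bc]
    rw [hB] at h
    simp only [ZeroMemClass.coe_zero, add_zero, zero_add, mul_zero, sub_zero] at h
    linear_combination h
  set W : MvPolynomial (Fin 2) ℂ :=
    MvPolynomial.C b * MvPolynomial.X 0
      - MvPolynomial.aeval ![0, MvPolynomial.X 0 + MvPolynomial.X 1] (f 0 γ)
      + MvPolynomial.aeval ![0, MvPolynomial.X 1] (f 0 γ) with hW
  have hWeval : ∀ y : Fin 2 → ℂ, MvPolynomial.eval y W
      = b * y 0 - ev2 (f 0 γ) 0 (y 0 + y 1) + ev2 (f 0 γ) 0 (y 1) := by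
    intro y
    have h1 : (fun i => MvPolynomial.eval y
        ((![0, MvPolynomial.X 0 + MvPolynomial.X 1] : Fin 2 → MvPolynomial (Fin 2) ℂ) i))
        = ![0, y 0 + y 1] := by
      funext i; fin_cases i <;> simp
    have h2 : (fun i => MvPolynomial.eval y
        ((![0, MvPolynomial.X 1] : Fin 2 → MvPolynomial (Fin 2) ℂ) i))
        = ![0, y 1] := by
      funext i; fin_cases i <;> simp
    rw [hW]
    rw [map_add, map_sub, map_mul, MvPolynomial.eval_C, MvPolynomial.eval_X,
      meval_aeval, meval_aeval, h1, h2]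
    rfl
  have hprod : f 0 γ * W = 0 := by
    apply MvPolynomial.funext
    intro y
    rw [map_mul, hWeval y, map_zero]
    have h3 := key (y 0) (y 1)
    simp only [ev2] at h3 ⊢
    rw [vec_eta] at h3
    exact h3
  have hW0 : W = 0 := by
    rcases mul_eq_zero.mp hprod with h | h
    · exact absurd h (hnz 0 γ)
    · exact h
  have h4 := hWeval ![x, 0]
  rw [hW0, map_zero] at h4
  simp only [Matrix.cons_val_zero, Matrix.cons_val_one, Matrix.head_cons, add_zero] at h4
  linear_combination h4

/-- Step E : the polynomial identity
`(bλ + φα)∂₀P + (b∂ + c')∂₁P = (α + b + Q_γ(λ+∂) − Q_{α+γ}(∂))·P`. -/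
lemma stepE (hb0 : b ≠ 0) (hf : ISE Δ b φ f) (hnz : ∀ α γ : Δ, f α γ ≠ 0) (α γ : Δ) :
    MvPolynomial.C b * MvPolynomial.X 0 * MvPolynomial.pderiv 0 (f α γ)
      + MvPolynomial.C (φ α) * MvPolynomial.pderiv 0 (f α γ)
      + MvPolynomial.C b * MvPolynomial.X 1 * MvPolynomial.pderiv 1 (f α γ)
      + MvPolynomial.C (ev2 (f 0 (α + γ)) 0 0) * MvPolynomial.pderiv 1 (f α γ)
    = (MvPolynomial.C ((α : ℂ) + b)
        + Polynomial.aeval (MvPolynomial.X 0 + MvPolynomial.X 1 : MvPolynomial (Fin 2) ℂ)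
            (Qp f γ)
        - Polynomial.aeval (MvPolynomial.X 1 : MvPolynomial (Fin 2) ℂ) (Qp f (α + γ)))
      * f α γ := by
  apply MvPolynomial.funext
  intro y
  rw [← vec_eta y]
  set l := y 0 with hl
  set d := y 1 with hd
  have hB : Bc b φ α 0 = φ α := by
    rw [Bc, map_zero, ZeroMemClass.coe_zero]
    simp only [mul_zero, zero_mul, sub_zero, zero_add]
    rw [← mul_assoc, one_div, inv_mul_cancel₀ hb0, one_mul]
  have hpoly : (Polynomial.C (b * l + φ α) - Polynomial.C ((α : ℂ) + b) * Polynomial.X)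
        * (MvPolynomial.aeval ![C l + X, C d] (f α γ))
      = (MvPolynomial.aeval ![C 0 + X, C (l + d)] (f 0 γ))
          * Polynomial.C (ev2 (f α γ) l d)
        - (MvPolynomial.aeval ![C l, C d + X] (f α γ))
          * (MvPolynomial.aeval ![C 0 + X, C d] (f 0 (α + γ))) := by
    apply Polynomial.funext
    intro m
    have h := hf α 0 γ l m d
    rw [hB] at h
    simp only [ZeroMemClass.coe_zero, zero_add, add_zero] at h
    rw [show m + d = d + m from add_comm m d] at h
    simp only [eval_mul, eval_sub, eval_add, eval_C, eval_X]
    rw [aeval_eval_fst (f α γ) l d m, aeval_eval_fst (f 0 γ) 0 (l + d) m,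
      aeval_eval_snd (f α γ) l d m, aeval_eval_fst (f 0 (α + γ)) 0 d m]
    simp only [zero_add]
    linear_combination h
  have hc := congrArg (fun p : Polynomial ℂ => p.coeff 1) hpoly
  simp only [coeff_one_mul, coeff_sub, Polynomial.coeff_C_mul, Polynomial.coeff_X_one,
    Polynomial.coeff_X_zero, Polynomial.coeff_C, mul_zero, zero_mul, add_zero, zero_add,
    mul_one, one_ne_zero, if_false, if_true, sub_zero, zero_sub] at hc
  simp only [coeff_one_aeval_fst, coeff_zero_aeval_fst, coeff_one_aeval_snd,
    coeff_zero_aeval_snd] at hc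
  have hc0 : MvPolynomial.eval ![(0:ℂ), d] (f 0 (α + γ)) = b * d + ev2 (f 0 (α+γ)) 0 0 := by
    have h5 := stepA b φ f hf hnz (α + γ) d
    rw [ev2, ev2] at h5
    exact h5
  rw [hc0] at hc
  -- now evaluate the goal at ![l, d]
  simp only [map_add, map_sub, map_mul, MvPolynomial.eval_C, MvPolynomial.eval_X]
  rw [eval_polyAeval, eval_polyAeval]
  simp only [map_add, MvPolynomial.eval_X]
  rw [Qp_eval, Qp_eval]
  simp only [ev2] at hc ⊢
  simp only [Matrix.cons_val_zero, Matrix.cons_val_one, Matrix.head_cons] at hc ⊢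
  linear_combination hc

/-- Step C : each `Q_γ` is a constant polynomial. -/
lemma stepConst (hb0 : b ≠ 0) (hf : ISE Δ b φ f) (hnz : ∀ α γ : Δ, f α γ ≠ 0) (γ : Δ) :
    (Qp f γ).natDegree = 0 := by
  have hE := stepE b φ f hb0 hf hnz 0 γ
  rw [zero_add] at hE
  simp only [ZeroMemClass.coe_zero, zero_add, map_zero, MvPolynomial.C_0, zero_mul,
    add_zero] at hE
  -- hE : C b * X 0 * pd0 g + C b * X 1 * pd1 g + C c * pd1 g
  --      = (C b + aeval (X0+X1) Q - aeval X1 Q) * g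
  have hTg : Th (f 0 γ) ≠ 0 := fun h => (hnz 0 γ) (Th_eq_zero_iff _ h)
  have hlc : (Th (f 0 γ)).leadingCoeff ≠ 0 := Polynomial.leadingCoeff_ne_zero.mpr hTg
  obtain ⟨d₀, hd₀⟩ : ∃ d₀ : ℂ, Polynomial.eval d₀ (Th (f 0 γ)).leadingCoeff ≠ 0 := by
    have hfin := Polynomial.finite_setOf_isRoot hlc
    obtain ⟨x, hx⟩ := hfin.infinite_compl.nonempty
    exact ⟨x, fun hroot => hx hroot⟩
  set σp : MvPolynomial (Fin 2) ℂ →ₐ[ℂ] Polynomial ℂ := MvPolynomial.aeval ![X, C d₀] with hσp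
  have hσC : ∀ a : ℂ, σp (MvPolynomial.C a) = C a := by
    intro a
    rw [hσp]
    simp [Polynomial.algebraMap_eq]
  have hσX0 : σp (MvPolynomial.X 0) = X := by rw [hσp]; simp
  have hσX1 : σp (MvPolynomial.X 1) = C d₀ := by rw [hσp]; simp
  have hσQ1 : σp (Polynomial.aeval (MvPolynomial.X 0 + MvPolynomial.X 1 :
      MvPolynomial (Fin 2) ℂ) (Qp f γ)) = (Qp f γ).comp (X + C d₀) := by
    rw [← Polynomial.aeval_algHom_apply, map_add, hσX0, hσX1, polyaeval_eq_comp]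
  have hσQ2 : σp (Polynomial.aeval (MvPolynomial.X 1 : MvPolynomial (Fin 2) ℂ)
      (Qp f γ)) = C ((Qp f γ).eval d₀) := by
    rw [← Polynomial.aeval_algHom_apply, hσX1, polyaeval_eq_comp, Polynomial.comp_C]
  have hid := congrArg σp hE
  simp only [map_add, map_mul, map_sub, hσC, hσX0, hσX1, hσQ1, hσQ2] at hid
  -- degrees
  set r : ℕ := (Th (f 0 γ)).natDegree with hr
  have hσmap : ∀ R : MvPolynomial (Fin 2) ℂ, σp R = (Th R).map (evalRingHom d₀) := by
    intro R
    rw [hσp, Th_map_eval]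
  have hPg : σp (f 0 γ) ≠ 0 := by
    intro h0
    apply hd₀
    have : ((Th (f 0 γ)).map (evalRingHom d₀)).coeff r = 0 := by
      rw [← hσmap, h0]; simp
    rw [Polynomial.coeff_map] at this
    exact this
  have hPgdeg : (σp (f 0 γ)).natDegree = r := by
    rw [hσmap, hr]
    exact Polynomial.natDegree_map_of_leadingCoeff_ne_zero _ hd₀
  have hA0 : (σp (MvPolynomial.pderiv 0 (f 0 γ))).natDegree ≤ r - 1 := by
    rw [hσmap]
    refine Polynomial.natDegree_map_le.trans ?_
    rw [Th_pderiv_fst]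
    exact Polynomial.natDegree_derivative_le _
  have hA0z : r = 0 → σp (MvPolynomial.pderiv 0 (f 0 γ)) = 0 := by
    intro h0
    rw [hσmap, Th_pderiv_fst]
    have : Th (f 0 γ) = C ((Th (f 0 γ)).coeff 0) := Polynomial.eq_C_of_natDegree_eq_zero h0
    rw [this]
    simp
  have hA1 : (σp (MvPolynomial.pderiv 1 (f 0 γ))).natDegree ≤ r := by
    rw [hσmap]
    exact Polynomial.natDegree_map_le.trans (Th_pderiv_snd_natDegree _)
  -- LHS degree ≤ r
  have hLHS : (C b * X * σp (MvPolynomial.pderiv 0 (f 0 γ))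
      + C b * C d₀ * σp (MvPolynomial.pderiv 1 (f 0 γ))
      + C (ev2 (f 0 γ) 0 0) * σp (MvPolynomial.pderiv 1 (f 0 γ))).natDegree ≤ r := by
    refine (Polynomial.natDegree_add_le _ _).trans ?_
    refine max_le ((Polynomial.natDegree_add_le _ _).trans (max_le ?_ ?_)) ?_
    · rcases Nat.eq_zero_or_pos r with h0 | hpos
      · rw [hA0z h0, mul_zero]
        simp
      · refine (Polynomial.natDegree_mul_le).trans ?_
        have : (C b * X).natDegree ≤ 1 := by
          refine (Polynomial.natDegree_mul_le).trans ?_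
          simp
        have h2 := hA0
        omega
    · rw [← Polynomial.C_mul]
      exact (Polynomial.natDegree_C_mul_le _ _).trans hA1
    · exact (Polynomial.natDegree_C_mul_le _ _).trans hA1
  -- conclude
  have hcompdeg : ((Qp f γ).comp (X + C d₀)).natDegree = 0 := by
    by_cases hRg : C b + (Qp f γ).comp (X + C d₀) - C ((Qp f γ).eval d₀) = 0
    · have : (Qp f γ).comp (X + C d₀) = C ((Qp f γ).eval d₀) - C b := by
        linear_combination hRg
      rw [this, ← Polynomial.C_sub]
      exact Polynomial.natDegree_C _
    · have hmul := congrArg Polynomial.natDegree hid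
      rw [Polynomial.natDegree_mul hRg hPg, hPgdeg] at hmul
      have hRg0 : (C b + (Qp f γ).comp (X + C d₀) - C ((Qp f γ).eval d₀)).natDegree = 0 := by
        have := hLHS
        omega
      have : (Qp f γ).comp (X + C d₀)
          = (C b + (Qp f γ).comp (X + C d₀) - C ((Qp f γ).eval d₀))
            + C ((Qp f γ).eval d₀) - C b := by ring
      rw [this]
      refine Nat.le_zero.mp ?_
      refine (Polynomial.natDegree_sub_le _ _).trans ?_
      refine max_le ((Polynomial.natDegree_add_le _ _).trans (max_le ?_ ?_)) ?_
      · omega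
      · simp
      · simp
  have := Polynomial.natDegree_comp (p := Qp f γ) (q := X + C d₀)
  rw [Polynomial.natDegree_X_add_C] at this
  omega

/-- Step KEY : `b · deg f_{α,γ} = α + b + a_γ − a_{α+γ}`. -/
lemma stepKEY (hb0 : b ≠ 0) (hf : ISE Δ b φ f) (hnz : ∀ α γ : Δ, f α γ ≠ 0) (α γ : Δ) :
    b * ((f α γ).totalDegree : ℂ)
      = (α : ℂ) + b + (Qp f γ).coeff 0 - (Qp f (α + γ)).coeff 0 := by
  have hE := stepE b φ f hb0 hf hnz α γ
  have hQ1 : Qp f γ = C ((Qp f γ).coeff 0) :=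
    Polynomial.eq_C_of_natDegree_eq_zero (stepConst b φ f hb0 hf hnz γ)
  have hQ2 : Qp f (α + γ) = C ((Qp f (α + γ)).coeff 0) :=
    Polynomial.eq_C_of_natDegree_eq_zero (stepConst b φ f hb0 hf hnz (α + γ))
  rw [hQ1, hQ2, Polynomial.aeval_C, Polynomial.aeval_C] at hE
  have halg : ∀ a : ℂ, algebraMap ℂ (MvPolynomial (Fin 2) ℂ) a = MvPolynomial.C a :=
    fun a => rfl
  rw [halg, halg] at hE
  obtain ⟨u, hu_mem, hu_sup⟩ := Finset.exists_mem_eq_sup (f α γ).support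
    (MvPolynomial.support_nonempty.mpr (hnz α γ)) (fun s : Fin 2 →₀ ℕ => s.sum fun _ e => e)
  have hcu : MvPolynomial.coeff u (f α γ) ≠ 0 := MvPolynomial.mem_support_iff.mp hu_mem
  have htd : (f α γ).totalDegree = u.sum fun _ e => e := by
    rw [MvPolynomial.totalDegree]
    exact hu_sup
  have hzero : ∀ i : Fin 2, MvPolynomial.coeff (u + Finsupp.single i 1) (f α γ) = 0 := by
    intro i
    apply MvPolynomial.coeff_eq_zero_of_totalDegree_lt
    set w : Fin 2 →₀ ℕ := u + Finsupp.single i 1 with hw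
    have hs : (∑ j ∈ w.support, w j) = w.sum fun _ e => e := rfl
    rw [htd, hs, hw, sum_add_single]
    omega
  have hc := congrArg (MvPolynomial.coeff u) hE
  simp only [MvPolynomial.coeff_add] at hc
  rw [mul_assoc (MvPolynomial.C b), mul_assoc (MvPolynomial.C b)] at hc
  rw [MvPolynomial.coeff_C_mul, MvPolynomial.coeff_C_mul, MvPolynomial.coeff_C_mul,
    MvPolynomial.coeff_C_mul, coeff_X_mul_pderiv, coeff_X_mul_pderiv,
    coeff_pderiv, coeff_pderiv] at hc
  rw [hzero 0, hzero 1] at hc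
  have hKC : (MvPolynomial.C ((α : ℂ) + b) + MvPolynomial.C ((Qp f γ).coeff 0)
      - MvPolynomial.C ((Qp f (α + γ)).coeff 0) : MvPolynomial (Fin 2) ℂ)
      = MvPolynomial.C ((α : ℂ) + b + (Qp f γ).coeff 0 - (Qp f (α + γ)).coeff 0) := by
    simp only [MvPolynomial.C_add, MvPolynomial.C_sub]
    try ring
  rw [hKC, MvPolynomial.coeff_C_mul] at hc
  have hn : ((f α γ).totalDegree : ℂ) = (u 0 : ℂ) + (u 1 : ℂ) := by
    rw [htd]
    rw [Finsupp.sum_fintype _ _ (fun _ => rfl), Fin.sum_univ_two]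
    push_cast
    ring
  have hfin : (b * ((u 0 : ℂ) + (u 1 : ℂ))
      - ((α : ℂ) + b + (Qp f γ).coeff 0 - (Qp f (α + γ)).coeff 0))
      * MvPolynomial.coeff u (f α γ) = 0 := by
    linear_combination hc
  rcases mul_eq_zero.mp hfin with h | h
  · rw [hn]
    linear_combination h
  · exact absurd h hcu

end Main
end Stmt14Aux

/-- If a family satisfying the intermediate-series equation has all
members nonzero, then every `f_{β,γ}(λ,∂)` has total degree (in `λ` and `∂` together)
at most 2, i.e. strictly smaller than 3. -/
theorem stmt14 (Δ : AddSubgroup ℂ) (hΔinf : (Δ : Set ℂ).Infinite)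
    (b : ℂ) (hb : 2 * b ∉ Δ) (φ : Δ →+ ℂ)
    (f : Δ → Δ → MvPolynomial (Fin 2) ℂ) (hf : ISE Δ b φ f)
    (hnz : ∀ α γ : Δ, f α γ ≠ 0) :
    ∀ β γ : Δ, (f β γ).totalDegree ≤ 2 := by
  intro β γ
  have hb0 : b ≠ 0 := by
    intro h
    apply hb
    rw [h, mul_zero]
    exact Δ.zero_mem
  have k1 := Stmt14Aux.stepKEY b φ f hb0 hf hnz β γ
  have k2 := Stmt14Aux.stepKEY b φ f hb0 hf hnz (-β) (β + γ)
  rw [show (-β) + (β + γ) = γ from by abel] at k2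
  have hcoe : ((-β : Δ) : ℂ) = -(β : ℂ) := by push_cast; ring
  rw [hcoe] at k2
  have hsum : b * (((f β γ).totalDegree : ℂ) + ((f (-β) (β + γ)).totalDegree : ℂ))
      = b * 2 := by
    linear_combination k1 + k2
  have h2 : ((f β γ).totalDegree : ℂ) + ((f (-β) (β + γ)).totalDegree : ℂ) = 2 :=
    mul_left_cancel₀ hb0 hsum
  have h3 : (f β γ).totalDegree + (f (-β) (β + γ)).totalDegree = 2 := by
    exact_mod_cast h2
  omega
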